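/- Let (V, σ, F) satisfy P0–P4, AP1 and AP2. If four consecutive vertices m2, m1, p, m3 on the circle have signs −, −, +, −, then m1 is removable: there is no m1-dangerous set and no m1-dangerous pair in F. -/
import Mathlib


/-- A set of vertices on the circle `ZMod n` is a circular interval if it consists of
consecutive vertices. -/
def IsCircularInterval {n : ℕ} (U : Set (ZMod n)) : Prop :=
  ∃ (a : ZMod n) (k : ℕ), U = {x | ∃ i : ℕ, i < k ∧ x = a + (i : ZMod n)}

lemma stmt11_key {n : ℕ} (hn : 4 ≤ n)
    (σ : ZMod n → Bool) (F : Set (Set (ZMod n)))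
    (hAP1 : ∀ U ∈ F, ∀ u ∈ U, σ u = true →
      ∀ u', u' ∉ U → (u' = u + 1 ∨ u = u' + 1) → σ u' = true)
    (hAP2 : ∀ U ∈ F, ∀ u ∈ U, σ u = false →
      ∀ u', u' ∉ U → (u' = u + 1 ∨ u = u' + 1) → σ u' = false)
    (m2 m1 p m3 : ZMod n)
    (hm1 : m1 = m2 + 1) (hp : p = m2 + 2) (hm3 : m3 = m2 + 3)
    (hσm2 : σ m2 = false) (hσm1 : σ m1 = false)
    (hσp : σ p = true) (hσm3 : σ m3 = false)
    (S : Set (ZMod n)) (hS : m1 ∉ S)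
    (hall : ∀ x ∉ S, σ x = false → x = m1)
    (hcov : ∀ x ∈ S, ∃ X ∈ F, x ∈ X ∧ X ⊆ S) : False := by
  haveI : NeZero n := ⟨by omega⟩
  have h1 : (1 : ZMod n) ≠ 0 := by
    intro h
    have := Nat.le_of_dvd one_pos ((ZMod.natCast_eq_zero_iff 1 n).mp (by exact_mod_cast h))
    omega
  have h2 : (2 : ZMod n) ≠ 0 := by
    intro h
    have := Nat.le_of_dvd two_pos ((ZMod.natCast_eq_zero_iff 2 n).mp (by exact_mod_cast h))
    omega
  have hm2S : m2 ∈ S := by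
    by_contra h
    have := hall m2 h hσm2
    rw [hm1, left_eq_add] at this
    exact h1 this
  have hm3S : m3 ∈ S := by
    by_contra h
    have := hall m3 h hσm3
    rw [hm3, hm1] at this
    exact h2 (by linear_combination this)
  have hpm1 : p = m1 + 1 := by rw [hp, hm1]; ring
  have hm3p : m3 = p + 1 := by rw [hm3, hp]; ring
  by_cases hpS : p ∈ S
  · obtain ⟨X, hXF, hpX, hXS⟩ := hcov p hpS
    have := hAP1 X hXF p hpX hσp m1 (fun h => hS (hXS h)) (Or.inr hpm1)
    rw [hσm1] at this
    exact Bool.false_ne_true this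
  · obtain ⟨X, hXF, hm3X, hXS⟩ := hcov m3 hm3S
    have := hAP2 X hXF m3 hm3X hσm3 p (fun h => hpS (hXS h)) (Or.inr hm3p)
    rw [hσp] at this
    exact Bool.false_ne_true this.symm

theorem stmt_11 {n : ℕ} (hn : 4 ≤ n)
    (σ : ZMod n → Bool) (F : Set (Set (ZMod n)))
    (hF : ∀ U ∈ F, U ≠ ∅ ∧ U ≠ Set.univ)
    (hP0 : ∀ U ∈ F, IsCircularInterval U)
    (hP1 : ∀ U ∈ F, ∀ W ∈ F, (U ∩ W).Nonempty → U ∪ W ≠ Set.univ →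
      U ∩ W ∈ F ∧ U ∪ W ∈ F)
    (hP2 : ∀ U ∈ F, (∃ u ∈ U, σ u = true) ∧ (∃ v ∉ U, σ v = false))
    (hP3 : ∀ U ∈ F, ∀ W ∈ F, U ∩ W = ∅ → ∃ v ∉ U ∪ W, σ v = false)
    (hP4 : ∀ U ∈ F, ∀ W ∈ F, U ∪ W = Set.univ → ∃ u ∈ U ∩ W, σ u = true)
    (hAP1 : ∀ U ∈ F, ∀ u ∈ U, σ u = true →
      ∀ u', u' ∉ U → (u' = u + 1 ∨ u = u' + 1) → σ u' = true)
    (hAP2 : ∀ U ∈ F, ∀ u ∈ U, σ u = false →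
      ∀ u', u' ∉ U → (u' = u + 1 ∨ u = u' + 1) → σ u' = false)
    (m2 m1 p m3 : ZMod n)
    (hm1 : m1 = m2 + 1) (hp : p = m2 + 2) (hm3 : m3 = m2 + 3)
    (hσm2 : σ m2 = false) (hσm1 : σ m1 = false)
    (hσp : σ p = true) (hσm3 : σ m3 = false) :
    (¬ ∃ U ∈ F, m1 ∉ U ∧ ∀ x ∉ U, σ x = false → x = m1) ∧
    (¬ ∃ U ∈ F, ∃ W ∈ F, U ∩ W = ∅ ∧ m1 ∉ U ∪ W ∧
        ∀ x ∉ U ∪ W, σ x = false → x = m1) := by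
  constructor
  · rintro ⟨U, hU, hm1U, hall⟩
    exact stmt11_key hn σ F hAP1 hAP2 m2 m1 p m3 hm1 hp hm3 hσm2 hσm1 hσp hσm3
      U hm1U hall (fun x hx => ⟨U, hU, hx, subset_rfl⟩)
  · rintro ⟨U, hU, W, hW, _, hm1UW, hall⟩
    refine stmt11_key hn σ F hAP1 hAP2 m2 m1 p m3 hm1 hp hm3 hσm2 hσm1 hσp hσm3
      (U ∪ W) hm1UW hall (fun x hx => ?_)
    rcases hx with hx | hx
    · exact ⟨U, hU, hx, Set.subset_union_left⟩
    · exact ⟨W, hW, hx, Set.subset_union_right⟩
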